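/- Let A ∈ ℝ^{n×n}, let V and V_ss be symmetric positive definite n×n matrices, let Σ be symmetric positive semidefinite, and suppose A V_ss + V_ss Aᵀ + Σ = 0. Then tr{ (V_ss⁻¹ − V⁻¹) A (V − V_ss) } = −(1/2) tr{ (V_ss⁻¹ − V⁻¹) Σ (V_ss⁻¹ − V⁻¹) V } ≤ 0. Moreover, if Σ is positive definite, then equality holds if and only if V = V_ss. -/

import Mathlib

open Matrix

open scoped MatrixOrder in
private lemma posSemidef_iff_eq_transpose_mul_self {n : ℕ} {A : Matrix (Fin n) (Fin n) ℝ} :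
    A.PosSemidef ↔ ∃ B : Matrix (Fin n) (Fin n) ℝ, A = Bᴴ * B := by
  constructor
  · intro h
    obtain ⟨B, hB⟩ := CStarAlgebra.nonneg_iff_eq_star_mul_self.mp h.nonneg
    exact ⟨B, hB⟩
  · rintro ⟨B, rfl⟩
    exact posSemidef_conjTranspose_mul_self B

private lemma psd_trace_nonneg {n : ℕ} {P : Matrix (Fin n) (Fin n) ℝ}
    (hP : P.PosSemidef) : 0 ≤ P.trace := by
  obtain ⟨B, rfl⟩ := (posSemidef_iff_eq_transpose_mul_self.mp hP)
  rw [trace]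
  refine Finset.sum_nonneg fun j _ => ?_
  simp only [diag, mul_apply, conjTranspose_apply, star_trivial]
  exact Finset.sum_nonneg fun i _ => mul_self_nonneg _

private lemma psd_trace_zero {n : ℕ} {P : Matrix (Fin n) (Fin n) ℝ}
    (hP : P.PosSemidef) (h0 : P.trace = 0) : P = 0 := by
  obtain ⟨B, rfl⟩ := (posSemidef_iff_eq_transpose_mul_self.mp hP)
  have hB : B = 0 := by
    have hsum : ∑ j, ∑ i, B i j * B i j = 0 := by
      simpa [trace, diag, mul_apply, conjTranspose_apply] using h0
    ext i j
    have h1 : ∀ j ∈ Finset.univ, (0:ℝ) ≤ ∑ i, B i j * B i j :=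
      fun j _ => Finset.sum_nonneg fun i _ => mul_self_nonneg _
    have h2 := (Finset.sum_eq_zero_iff_of_nonneg h1).mp hsum j (Finset.mem_univ _)
    have h3 := (Finset.sum_eq_zero_iff_of_nonneg
      (fun i _ => mul_self_nonneg (B i j))).mp h2 i (Finset.mem_univ _)
    simpa [mul_self_eq_zero] using h3
  simp [hB]

/-- With `V`, `V_ss` symmetric positive definite, `Σ` positive
semidefinite and `A V_ss + V_ss Aᵀ + Σ = 0`, one has
`tr{(V_ss⁻¹ − V⁻¹) A (V − V_ss)} = −(1/2) tr{(V_ss⁻¹ − V⁻¹) Σ (V_ss⁻¹ − V⁻¹) V} ≤ 0`,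
with equality (when `Σ` is positive definite) iff `V = V_ss`. -/
theorem free_surprise_rate_nonpositive {n : ℕ}
    (A Sig V Vss : Matrix (Fin n) (Fin n) ℝ)
    (hV : V.PosDef) (hVss : Vss.PosDef) (hSig : Sig.PosSemidef)
    (hLyap : A * Vss + Vss * Aᵀ + Sig = 0) :
    ((Vss⁻¹ - V⁻¹) * A * (V - Vss)).trace
        = -(1 / 2 : ℝ) * ((Vss⁻¹ - V⁻¹) * Sig * (Vss⁻¹ - V⁻¹) * V).trace
      ∧ ((Vss⁻¹ - V⁻¹) * A * (V - Vss)).trace ≤ 0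
      ∧ (Sig.PosDef →
          (((Vss⁻¹ - V⁻¹) * A * (V - Vss)).trace = 0 ↔ V = Vss)) := by
  set D : Matrix (Fin n) (Fin n) ℝ := Vss⁻¹ - V⁻¹ with hD
  have hVdet : IsUnit V.det := isUnit_iff_ne_zero.mpr hV.det_pos.ne'
  have hVssdet : IsUnit Vss.det := isUnit_iff_ne_zero.mpr hVss.det_pos.ne'
  have hVsym : Vᵀ = V := by
    have := hV.isHermitian
    rwa [IsHermitian, conjTranspose_eq_transpose_of_trivial] at this
  have hVsssym : Vssᵀ = Vss := by
    have := hVss.isHermitian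
    rwa [IsHermitian, conjTranspose_eq_transpose_of_trivial] at this
  have hDsym : Dᵀ = D := by
    rw [hD, transpose_sub, transpose_nonsing_inv, transpose_nonsing_inv, hVsym, hVsssym]
  have hfac : Vss * D * V = V - Vss := by
    rw [hD, mul_sub, sub_mul, Matrix.mul_nonsing_inv _ hVssdet, one_mul,
      mul_assoc, Matrix.nonsing_inv_mul _ hVdet, mul_one]
  have hL : A * Vss + Vss * Aᵀ = -Sig := by
    linear_combination (norm := module) hLyap
  -- T = trace (D * (A*Vss) * (D*V))
  have hT1 : (D * A * (V - Vss)).trace = (D * (A * Vss) * (D * V)).trace := by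
    rw [← hfac]
    congr 1
    simp only [mul_assoc]
  -- T = trace (D * (Vss*Aᵀ) * (D*V)) via transpose + cyclicity
  have hT2 : (D * (A * Vss) * (D * V)).trace = (D * (Vss * Aᵀ) * (D * V)).trace := by
    have e1 : (D * (A * Vss) * (D * V))ᵀ = (V * D) * ((Vss * Aᵀ) * D) := by
      simp only [transpose_mul, hDsym, hVsym, hVsssym, mul_assoc]
    rw [← trace_transpose (D * (A * Vss) * (D * V)), e1, trace_mul_comm,
      show D * (Vss * Aᵀ) * (D * V) = D * ((Vss * Aᵀ) * (D * V)) from by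
        simp only [mul_assoc],
      trace_mul_comm D]
    congr 1
    simp only [mul_assoc]
  have hsum : (D * A * (V - Vss)).trace + (D * A * (V - Vss)).trace
      = -((D * Sig * D * V).trace) := by
    calc (D * A * (V - Vss)).trace + (D * A * (V - Vss)).trace
        = (D * (A * Vss) * (D * V)).trace + (D * (Vss * Aᵀ) * (D * V)).trace := by
          rw [hT1, hT2]
      _ = ((D * (A * Vss) + D * (Vss * Aᵀ)) * (D * V)).trace := by
          rw [add_mul, trace_add]
      _ = ((D * (A * Vss + Vss * Aᵀ)) * (D * V)).trace := by rw [mul_add]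
      _ = ((D * (-Sig)) * (D * V)).trace := by rw [hL]
      _ = -((D * Sig * D * V).trace) := by
          rw [mul_neg, neg_mul, trace_neg]
          congr 2
          simp only [mul_assoc]
  have hident : (D * A * (V - Vss)).trace
      = -(1 / 2 : ℝ) * ((D * Sig * D * V).trace) := by linarith
  -- positivity of t = tr(D Σ D V)
  have hPSD : (D * Sig * D).PosSemidef := by
    have h := hSig.conjTranspose_mul_mul_same D
    rwa [conjTranspose_eq_transpose_of_trivial, hDsym] at h
  obtain ⟨B, hBdef⟩ := posSemidef_iff_eq_transpose_mul_self.mp hV.posSemidef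
  have hBdet : IsUnit B.det := by
    have hd : V.det = B.det * B.det := by
      rw [hBdef, det_mul, det_conjTranspose, star_trivial]
    rcases hVdet with hVdet'
    exact isUnit_of_mul_isUnit_right (by rw [← hd]; exact hVdet)
  have hBHdet : IsUnit Bᴴ.det := by
    rwa [det_conjTranspose, star_trivial]
  have hQ : (B * (D * Sig * D) * Bᴴ).PosSemidef := by
    have h := hPSD.conjTranspose_mul_mul_same Bᴴ
    rwa [conjTranspose_conjTranspose] at h
  have htreq : (D * Sig * D * V).trace = (B * (D * Sig * D) * Bᴴ).trace := by
    rw [hBdef,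
      show D * Sig * D * (Bᴴ * B) = (D * Sig * D * Bᴴ) * B from by simp only [mul_assoc],
      trace_mul_comm]
    congr 1
    simp only [mul_assoc]
  have htnonneg : 0 ≤ (D * Sig * D * V).trace := htreq ▸ psd_trace_nonneg hQ
  refine ⟨hident, by rw [hident]; linarith, fun hSigPD => ?_⟩
  constructor
  · intro hTzero
    have htzero : (D * Sig * D * V).trace = 0 := by
      rw [hident] at hTzero; linarith
    have hQzero : B * (D * Sig * D) * Bᴴ = 0 :=
      psd_trace_zero hQ (by rw [← htreq]; exact htzero)
    have hPzero : D * Sig * D = 0 := by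
      have : D * Sig * D = B⁻¹ * (B * (D * Sig * D) * Bᴴ) * Bᴴ⁻¹ := by
        rw [show B⁻¹ * (B * (D * Sig * D) * Bᴴ) * Bᴴ⁻¹
            = (B⁻¹ * B) * (D * Sig * D) * (Bᴴ * Bᴴ⁻¹) from by simp only [mul_assoc],
          Matrix.nonsing_inv_mul _ hBdet, Matrix.mul_nonsing_inv _ hBHdet,
          one_mul, mul_one]
      rw [this, hQzero, mul_zero, zero_mul]
    have hDzero : D = 0 := by
      have hmv : ∀ x : Fin n → ℝ, D *ᵥ x = 0 := by
        intro x
        by_contra hx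
        have h1 := hSigPD.dotProduct_mulVec_pos (x := D *ᵥ x) hx
        have h2 : dotProduct (star (D *ᵥ x)) (Sig *ᵥ (D *ᵥ x))
            = dotProduct x ((D * Sig * D) *ᵥ x) := by
          rw [star_trivial, mulVec_mulVec,
            show (D * Sig * D) *ᵥ x = D *ᵥ ((Sig * D) *ᵥ x) from by
              rw [mulVec_mulVec]; simp only [mul_assoc],
            dotProduct_mulVec x D, ← mulVec_transpose, hDsym]
        rw [h2, hPzero] at h1
        simp at h1
      ext i j
      have := congrFun (hmv (Pi.single j 1)) i
      simpa [mulVec_single] using this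
    have hinv : Vss⁻¹ = V⁻¹ := by
      have := sub_eq_zero.mp hDzero
      exact this
    calc V = V⁻¹⁻¹ := (Matrix.nonsing_inv_nonsing_inv _ hVdet).symm
      _ = Vss⁻¹⁻¹ := by rw [hinv]
      _ = Vss := Matrix.nonsing_inv_nonsing_inv _ hVssdet
  · intro hEq
    rw [hEq]
    simp
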